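/- There exists a universal constant C > 0 with the following property. Let E be a real inner product space and let P, Q, R, S ∈ E be unit vectors with P + S ≠ 0 and Q + R ≠ 0. Set P_{1/2} := (P+S)/‖P+S‖ and Q_{1/2} := (Q+R)/‖Q+R‖, and write d_{XY} := arccos⟨X,Y⟩ for unit vectors X, Y. Then cos²(d_{PS}/2) · d_{Q_{1/2}P_{1/2}}² ≤ (1/2)(d_{PQ}² + d_{RS}²) − (1/4)(d_{QR} − d_{PS})² + C·(d_{PQ} + d_{RS} + d_{P_{1/2}Q_{1/2}} + |d_{QR} − d_{PS}|)³. -/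

import Mathlib

open scoped RealInnerProductSpace

/-- For `x ≥ 0`, `x² ≤ 2(1 - cos x) + x³`. -/
private lemma lemA {x : ℝ} (hx : 0 ≤ x) : x ^ 2 ≤ 2 * (1 - Real.cos x) + x ^ 3 := by
  rcases eq_or_lt_of_le hx with h | h
  · simp [← h]
  rcases le_or_gt x 1 with h1 | h1
  · have hs : x/2 - (x/2)^3/4 < Real.sin (x/2) :=
      lt_of_le_of_lt (by nlinarith [pow_pos (by linarith : (0:ℝ) < x/2) 3])
        (Real.sin_gt_sub_cube (by linarith : (0:ℝ) < x/2))
    have hsq : Real.sin (x/2) ^ 2 = 1/2 - Real.cos x / 2 := by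
      have h2 := Real.cos_sq (x/2)
      rw [show 2*(x/2) = x by ring] at h2
      nlinarith [Real.sin_sq_add_cos_sq (x/2)]
    have hx2 : x^2 ≤ 1 := by nlinarith
    have hx3 : x^3 ≤ x := by nlinarith [mul_le_of_le_one_right hx hx2]
    have hpos : 0 ≤ x/2 - (x/2)^3/4 := by nlinarith
    have hsin2 : (x/2 - (x/2)^3/4)^2 ≤ Real.sin (x/2)^2 := by nlinarith [hs, hpos]
    nlinarith [hsin2, hsq, sq_nonneg x, sq_nonneg (x^2), mul_nonneg (mul_nonneg hx hx) hx]
  · nlinarith [Real.cos_le_one x, mul_pos (mul_pos h h) h]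

private lemma cos_lip (a b : ℝ) : |Real.cos a - Real.cos b| ≤ |a - b| := by
  rw [Real.cos_sub_cos, abs_mul, abs_mul]
  have h1 : |Real.sin ((a+b)/2)| ≤ 1 :=
    abs_le.mpr ⟨Real.neg_one_le_sin _, Real.sin_le_one _⟩
  have h2 : |Real.sin ((a-b)/2)| ≤ |(a-b)/2| := Real.abs_sin_le_abs
  have h3 : |(a-b)/2| = |a-b|/2 := by rw [abs_div]; norm_num
  have h2' : |Real.sin ((a-b)/2)| ≤ |a-b|/2 := h3 ▸ h2
  have h4 : |(-2 : ℝ)| = 2 := by norm_num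
  rw [h4]
  nlinarith [abs_nonneg (Real.sin ((a-b)/2)), abs_nonneg (Real.sin ((a+b)/2)),
    abs_nonneg (a-b), mul_le_mul h1 h2' (abs_nonneg _) zero_le_one]

private lemma two_sub_two_cos_le {x : ℝ} (hx : 0 ≤ x) (hx2 : x ≤ Real.pi) :
    2 - 2 * Real.cos x ≤ x ^ 2 := by
  have h2 := Real.cos_sq (x/2)
  rw [show 2*(x/2) = x by ring] at h2
  have hs1 : Real.sin (x/2) ≤ x/2 := Real.sin_le (by linarith)
  have hs0 : 0 ≤ Real.sin (x/2) :=
    Real.sin_nonneg_of_nonneg_of_le_pi (by linarith) (by linarith [Real.pi_pos])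
  nlinarith [Real.sin_sq_add_cos_sq (x/2)]


set_option maxHeartbeats 2000000 in
/-- Spherical midpoint estimate (Estimate I) for a quadrilateral `PQRS` of unit
vectors, with spherical midpoints `P_{1/2} = (P+S)/‖P+S‖`, `Q_{1/2} = (Q+R)/‖Q+R‖` and
`d_{XY} := arccos⟨X,Y⟩`:
`cos²(d_{PS}/2) d_{Q_{1/2}P_{1/2}}² ≤ (1/2)(d_{PQ}² + d_{RS}²) − (1/4)(d_{QR} − d_{PS})²
+ C (d_{PQ} + d_{RS} + d_{P_{1/2}Q_{1/2}} + |d_{QR} − d_{PS}|)³` for a universal `C > 0`. -/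
theorem spherical_midpoint_estimate :
    ∃ C : ℝ, 0 < C ∧
      ∀ (E : Type*) [NormedAddCommGroup E] [InnerProductSpace ℝ E]
        (P Q R S : E), ‖P‖ = 1 → ‖Q‖ = 1 → ‖R‖ = 1 → ‖S‖ = 1 →
        P + S ≠ 0 → Q + R ≠ 0 →
        Real.cos (Real.arccos ⟪P, S⟫ / 2) ^ 2
            * (Real.arccos ⟪‖Q + R‖⁻¹ • (Q + R), ‖P + S‖⁻¹ • (P + S)⟫) ^ 2
          ≤ (1 / 2) * ((Real.arccos ⟪P, Q⟫) ^ 2 + (Real.arccos ⟪R, S⟫) ^ 2)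
            - (1 / 4) * (Real.arccos ⟪Q, R⟫ - Real.arccos ⟪P, S⟫) ^ 2
            + C * (Real.arccos ⟪P, Q⟫ + Real.arccos ⟪R, S⟫
              + Real.arccos ⟪‖P + S‖⁻¹ • (P + S), ‖Q + R‖⁻¹ • (Q + R)⟫
              + |Real.arccos ⟪Q, R⟫ - Real.arccos ⟪P, S⟫|) ^ 3 := by
  refine ⟨2, by norm_num, ?_⟩
  intro E _ _ P Q R S hP hQ hR hS hPS hQR
  have hip : ∀ X Y : E, ‖X‖ = 1 → ‖Y‖ = 1 →
      -1 ≤ ⟪X, Y⟫ ∧ ⟪X, Y⟫ ≤ 1 := by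
    intro X Y hX hY
    have := abs_real_inner_le_norm X Y
    rw [hX, hY] at this
    constructor <;> [linarith [neg_abs_le ⟪X,Y⟫]; linarith [le_abs_self ⟪X,Y⟫]]
  -- abbreviations
  set p := Real.arccos ⟪P, S⟫ with hp_def
  set q := Real.arccos ⟪Q, R⟫ with hq_def
  set a := Real.arccos ⟪P, Q⟫ with ha_def
  set b := Real.arccos ⟪R, S⟫ with hb_def
  set m := Real.arccos ⟪‖Q + R‖⁻¹ • (Q + R), ‖P + S‖⁻¹ • (P + S)⟫ with hm_def
  set r := Real.cos (p / 2) with hr_def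
  set s := Real.cos (q / 2) with hs_def
  have hmm' : Real.arccos ⟪‖P + S‖⁻¹ • (P + S), ‖Q + R‖⁻¹ • (Q + R)⟫ = m := by
    rw [hm_def, real_inner_comm]
  rw [hmm']
  -- basic bounds on angles
  have hp0 : 0 ≤ p := Real.arccos_nonneg _
  have hpπ : p ≤ Real.pi := Real.arccos_le_pi _
  have hq0 : 0 ≤ q := Real.arccos_nonneg _
  have hqπ : q ≤ Real.pi := Real.arccos_le_pi _
  have ha0 : 0 ≤ a := Real.arccos_nonneg _
  have haπ : a ≤ Real.pi := Real.arccos_le_pi _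
  have hb0 : 0 ≤ b := Real.arccos_nonneg _
  have hbπ : b ≤ Real.pi := Real.arccos_le_pi _
  have hm0 : 0 ≤ m := Real.arccos_nonneg _
  -- cosines of arccos
  have hPSi := hip P S hP hS
  have hQRi := hip Q R hQ hR
  have hPQi := hip P Q hP hQ
  have hRSi := hip R S hR hS
  have hcosp : ⟪P, S⟫ = Real.cos p := (Real.cos_arccos hPSi.1 hPSi.2).symm
  have hcosq : ⟪Q, R⟫ = Real.cos q := (Real.cos_arccos hQRi.1 hQRi.2).symm
  have hcosa : ⟪P, Q⟫ = Real.cos a := (Real.cos_arccos hPQi.1 hPQi.2).symm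
  have hcosb : ⟪R, S⟫ = Real.cos b := (Real.cos_arccos hRSi.1 hRSi.2).symm
  -- half-angle cosines and norms of P+S, Q+R
  have hcp2 : Real.cos p = 2 * r ^ 2 - 1 := by
    have h2 := Real.cos_sq (p/2)
    rw [show 2*(p/2) = p by ring] at h2
    rw [hr_def]; linarith only [h2]
  have hcq2 : Real.cos q = 2 * s ^ 2 - 1 := by
    have h2 := Real.cos_sq (q/2)
    rw [show 2*(q/2) = q by ring] at h2
    rw [hs_def]; linarith only [h2]
  have hr0 : 0 ≤ r := Real.cos_nonneg_of_mem_Icc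
    ⟨by linarith [Real.pi_pos], by linarith⟩
  have hs0 : 0 ≤ s := Real.cos_nonneg_of_mem_Icc
    ⟨by linarith [Real.pi_pos], by linarith⟩
  have hr1 : r ≤ 1 := Real.cos_le_one _
  have hs1 : s ≤ 1 := Real.cos_le_one _
  have hnu2 : ‖P + S‖ ^ 2 = (2 * r) ^ 2 := by
    rw [norm_add_sq_real, hP, hS, hcosp, hcp2]; ring
  have hnv2 : ‖Q + R‖ ^ 2 = (2 * s) ^ 2 := by
    rw [norm_add_sq_real, hQ, hR, hcosq, hcq2]; ring
  have hnu : ‖P + S‖ = 2 * r := by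
    have := Real.sqrt_sq (norm_nonneg (P + S))
    rw [← this, hnu2, Real.sqrt_sq (by linarith)]
  have hnv : ‖Q + R‖ = 2 * s := by
    have := Real.sqrt_sq (norm_nonneg (Q + R))
    rw [← this, hnv2, Real.sqrt_sq (by linarith)]
  have hrpos : 0 < r := by
    have h := norm_pos_iff.mpr hPS
    rw [hnu] at h; linarith only [h]
  have hspos : 0 < s := by
    have h := norm_pos_iff.mpr hQR
    rw [hnv] at h; linarith only [h]
  -- the midpoint angle
  have hmid_unit1 : ‖(‖Q + R‖⁻¹ • (Q + R))‖ = 1 := by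
    rw [norm_smul, norm_inv, norm_norm, inv_mul_cancel₀ (norm_ne_zero_iff.mpr hQR)]
  have hmid_unit2 : ‖(‖P + S‖⁻¹ • (P + S))‖ = 1 := by
    rw [norm_smul, norm_inv, norm_norm, inv_mul_cancel₀ (norm_ne_zero_iff.mpr hPS)]
  have hwi := hip _ _ hmid_unit1 hmid_unit2
  have hcosm : ⟪‖Q + R‖⁻¹ • (Q + R), ‖P + S‖⁻¹ • (P + S)⟫ = Real.cos m :=
    (Real.cos_arccos hwi.1 hwi.2).symm
  have hcm1 : Real.cos m ≤ 1 := Real.cos_le_one _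
  have huv : ⟪P + S, Q + R⟫ = 4 * (r * s) * Real.cos m := by
    have h1 : ⟪‖Q + R‖⁻¹ • (Q + R), ‖P + S‖⁻¹ • (P + S)⟫
        = ‖Q + R‖⁻¹ * (‖P + S‖⁻¹ * ⟪Q + R, P + S⟫) := by
      rw [real_inner_smul_left, real_inner_smul_right]
    rw [hcosm] at h1
    have h2 : ⟪Q + R, P + S⟫ = ⟪P + S, Q + R⟫ := real_inner_comm _ _
    rw [h2, hnu, hnv] at h1
    have hne1 : (2 * s) ≠ 0 := by positivity
    have hne2 : (2 * r) ≠ 0 := by positivity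
    field_simp at h1
    linarith only [h1]
  -- Euclidean midpoint identity and comparison
  have hD : ‖(P + S) - (Q + R)‖ ^ 2 = 4 * r ^ 2 + 4 * s ^ 2 - 8 * (r * s) * Real.cos m := by
    rw [norm_sub_sq_real, hnu2, hnv2, huv]; ring
  have hpar : ‖(P + S) - (Q + R)‖ ^ 2
      = 2 * ‖P - Q‖ ^ 2 + 2 * ‖S - R‖ ^ 2 - ‖(P - S) - (Q - R)‖ ^ 2 := by
    have e1 : (P + S) - (Q + R) = (P - Q) + (S - R) := by abel
    have e2 : (P - S) - (Q - R) = (P - Q) - (S - R) := by abel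
    rw [e1, e2, norm_add_sq_real (P - Q) (S - R), norm_sub_sq_real (P - Q) (S - R)]
    ring
  -- chord lengths
  have hchord : ∀ X Y : E, ‖X‖ = 1 → ‖Y‖ = 1 →
      ‖X - Y‖ ^ 2 = 2 - 2 * ⟪X, Y⟫ := by
    intro X Y hX hY
    rw [norm_sub_sq_real, hX, hY]; ring
  have hPQc : ‖P - Q‖ ^ 2 ≤ a ^ 2 := by
    rw [hchord P Q hP hQ, hcosa]
    exact two_sub_two_cos_le ha0 haπ
  have hSRc : ‖S - R‖ ^ 2 ≤ b ^ 2 := by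
    have : ‖S - R‖ = ‖R - S‖ := by rw [norm_sub_rev]
    rw [this, hchord R S hR hS, hcosb]
    exact two_sub_two_cos_le hb0 hbπ
  -- chords of diagonals as sines
  have hsinhalf : ∀ x : ℝ, 0 ≤ x → x ≤ Real.pi →
      2 - 2 * Real.cos x = (2 * Real.sin (x/2)) ^ 2 := by
    intro x hx hxπ
    have h2 := Real.cos_sq (x/2)
    rw [show 2*(x/2) = x by ring] at h2
    linear_combination 4*h2 - 4*Real.sin_sq_add_cos_sq (x/2)
  have hPSc : ‖P - S‖ = 2 * Real.sin (p/2) := by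
    have h1 : ‖P - S‖ ^ 2 = (2 * Real.sin (p/2)) ^ 2 := by
      rw [hchord P S hP hS, hcosp]; exact hsinhalf p hp0 hpπ
    have hsn : 0 ≤ Real.sin (p/2) :=
      Real.sin_nonneg_of_nonneg_of_le_pi (by linarith) (by linarith [Real.pi_pos])
    have := Real.sqrt_sq (norm_nonneg (P - S))
    rw [← this, h1, Real.sqrt_sq (by linarith)]
  have hQRc : ‖Q - R‖ = 2 * Real.sin (q/2) := by
    have h1 : ‖Q - R‖ ^ 2 = (2 * Real.sin (q/2)) ^ 2 := by
      rw [hchord Q R hQ hR, hcosq]; exact hsinhalf q hq0 hqπ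
    have hsn : 0 ≤ Real.sin (q/2) :=
      Real.sin_nonneg_of_nonneg_of_le_pi (by linarith) (by linarith [Real.pi_pos])
    have := Real.sqrt_sq (norm_nonneg (Q - R))
    rw [← this, h1, Real.sqrt_sq (by linarith)]
  have hlow : (2 * Real.sin (p/2) - 2 * Real.sin (q/2)) ^ 2 ≤ ‖(P - S) - (Q - R)‖ ^ 2 := by
    have h := abs_norm_sub_norm_le (P - S) (Q - R)
    calc (2 * Real.sin (p/2) - 2 * Real.sin (q/2)) ^ 2
        = |‖P - S‖ - ‖Q - R‖| ^ 2 := by rw [sq_abs, hPSc, hQRc]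
      _ ≤ ‖(P - S) - (Q - R)‖ ^ 2 := pow_le_pow_left₀ (abs_nonneg _) h 2
  -- main Euclidean comparison (F1)
  have F1 : 4 * r ^ 2 + 4 * s ^ 2 - 8 * (r * s) * Real.cos m
      ≤ 2 * a ^ 2 + 2 * b ^ 2
        - (2 * Real.sin (p/2) - 2 * Real.sin (q/2)) ^ 2 := by
    rw [← hD]; rw [hpar]; linarith only [hPQc, hSRc, hlow]
  have F1' : 4 * r ^ 2 + 4 * s ^ 2 - 8 * (r * s) * Real.cos m
      ≤ 2 * a ^ 2 + 2 * b ^ 2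
        - 4 * (Real.sin (p/2) - Real.sin (q/2)) ^ 2 := by
    have e : (2 * Real.sin (p/2) - 2 * Real.sin (q/2)) ^ 2
        = 4 * (Real.sin (p/2) - Real.sin (q/2)) ^ 2 := by ring
    linarith only [F1, e.le, e.ge]
  -- trig identity (F2)
  have F2 : (Real.sin (p/2) - Real.sin (q/2)) ^ 2 + (r - s) ^ 2
      = 2 - 2 * Real.cos (p/2 - q/2) := by
    have h1 := Real.sin_sq_add_cos_sq (p/2)
    have h2 := Real.sin_sq_add_cos_sq (q/2)
    have h3 := Real.cos_sub (p/2) (q/2)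
    rw [hr_def, hs_def]
    linear_combination h1 + h2 + 2*h3
  -- cubic-error lower bound for the diagonal-difference term (F3)
  clear_value p q a b m r s
  set T := |q - p| with hT_def
  clear_value T
  have hT0 : 0 ≤ T := by rw [hT_def]; exact abs_nonneg _
  have F3 : (q - p) ^ 2 / 4 ≤ 2 - 2 * Real.cos (p/2 - q/2) + T ^ 3 / 8 := by
    have h := lemA (abs_nonneg (p/2 - q/2))
    rw [Real.cos_abs] at h
    have habs : |p/2 - q/2| = T / 2 := by
      rw [hT_def, show p/2 - q/2 = -((q-p)/2) by ring, abs_neg, abs_div]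
      norm_num
    rw [habs] at h
    have hsq : (T / 2) ^ 2 = (q - p) ^ 2 / 4 := by
      rw [hT_def, div_pow, sq_abs]; ring
    linarith only [h, hsq]
  -- Taylor bound for m (F4)
  have F4 : m ^ 2 ≤ 2 * (1 - Real.cos m) + m ^ 3 := lemA hm0
  -- Lipschitz bound (F5)
  have F5 : |r - s| ≤ T / 2 := by
    have h := cos_lip (p/2) (q/2)
    have habs : |p/2 - q/2| = T / 2 := by
      rw [hT_def, show p/2 - q/2 = -((q-p)/2) by ring, abs_neg, abs_div]
      norm_num
    rw [habs] at h
    rw [hr_def, hs_def]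
    exact h
  have F5a : -(T/2) ≤ r - s := (abs_le.mp F5).1
  have F5b : r - s ≤ T/2 := (abs_le.mp F5).2
  -- step 1: midpoint defect bound
  have step1 : r * s * (2 * (1 - Real.cos m))
      ≤ (1/2) * a ^ 2 + (1/2) * b ^ 2 - (1/4) * (q - p) ^ 2 + T ^ 3 / 8 := by
    linarith only [F1', F2, F3]
  -- step 2: pass from r² m² to 2rs(1-cos m)
  have hm2 : (0:ℝ) ≤ m ^ 2 := sq_nonneg m
  have hm3 : (0:ℝ) ≤ m ^ 3 := by positivity
  have hint1 : r * s * m ^ 2 ≤ r * s * (2 * (1 - Real.cos m) + m ^ 3) :=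
    mul_le_mul_of_nonneg_left F4 (mul_nonneg hr0 hs0)
  have hrs1 : r * s ≤ 1 := mul_le_one₀ hr1 hs0 hs1
  have hint2 : r * s * m ^ 3 ≤ m ^ 3 := by
    linarith only [mul_nonneg (sub_nonneg.2 hrs1) hm3]
  have hint3 : r * (r - s) * m ^ 2 ≤ (T / 2) * m ^ 2 := by
    linarith only [mul_nonneg (mul_nonneg hr0 hm2) (sub_nonneg.2 F5b),
      mul_nonneg (mul_nonneg (sub_nonneg.2 hr1) (by positivity : (0:ℝ) ≤ T/2)) hm2]
  have step2 : r ^ 2 * m ^ 2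
      ≤ r * s * (2 * (1 - Real.cos m)) + m ^ 3 + (T / 2) * m ^ 2 := by
    linarith only [hint1, hint2, hint3]
  -- step 3: absorb cubic errors
  set Ssum := a + b + m + T with hSsum_def
  clear_value Ssum
  have hSsum0 : 0 ≤ Ssum := by
    rw [hSsum_def]; linarith only [ha0, hb0, hm0, hT0]
  have hmSsum : m ≤ Ssum := by rw [hSsum_def]; linarith only [ha0, hb0, hT0]
  have hTSsum : T ≤ Ssum := by rw [hSsum_def]; linarith only [ha0, hb0, hm0]
  have h8a : m ^ 3 ≤ Ssum ^ 3 := pow_le_pow_left₀ hm0 hmSsum 3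
  have h8b : T ^ 3 ≤ Ssum ^ 3 := pow_le_pow_left₀ hT0 hTSsum 3
  have h8c : T * m ^ 2 ≤ Ssum ^ 3 := by
    have hm2Ssum : m ^ 2 ≤ Ssum ^ 2 := pow_le_pow_left₀ hm0 hmSsum 2
    calc T * m ^ 2 ≤ Ssum * Ssum ^ 2 :=
          mul_le_mul hTSsum hm2Ssum (sq_nonneg m) hSsum0
      _ = Ssum ^ 3 := by ring
  have step3 : m ^ 3 + (T / 2) * m ^ 2 + T ^ 3 / 8 ≤ 2 * Ssum ^ 3 := by
    have hS3 : (0:ℝ) ≤ Ssum ^ 3 := pow_nonneg hSsum0 3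
    have hTm2 : (0:ℝ) ≤ T * m ^ 2 := mul_nonneg hT0 hm2
    linarith only [h8a, h8b, h8c, hS3, hTm2]
  -- conclusion
  linarith only [step1, step2, step3]
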